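/- Let F and F₀ be bivariate distribution functions of probability densities f and f₀ on 𝓜 = [0,M₁]×[0,M₂], and suppose the X-marginal density of f is bounded: ∫₀^{M₂} f(x,v) dv ≤ B for all x ∈ [0,M₁]. Fix t ∈ [0,M₁), z ∈ (0,M₂], C, η > 0 and h > 0 with t + h ≤ M₁ and B·h ≤ C·η/2. If F(t,z) ≤ F₀(t,z) − C·η, then F(x,z) − F₀(x,z) ≤ −C·η/2 for every x ∈ [t, t+h]; consequently, if g ≥ K̲ on (0,M₁), then ∫_t^{t+h} g(x)·(F(x,z) − F₀(x,z)) dx ≤ −(C·K̲/2)·η·h. -/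
import Mathlib

open MeasureTheory Set Real Filter

noncomputable section

/-- The set 𝓜 = [0,M₁]×[0,M₂]. -/
def Mset (M₁ M₂ : ℝ) : Set (ℝ × ℝ) := Icc 0 M₁ ×ˢ Icc 0 M₂

/-- The joint distribution function F(t,z) = ∫₀ᵗ ∫₀ᶻ f(u,v) dv du. -/
def distF (f : ℝ × ℝ → ℝ) (t z : ℝ) : ℝ := ∫ u in (0 : ℝ)..t, ∫ v in (0 : ℝ)..z, f (u, v)

/-- `f` is a probability density on 𝓜 = [0,M₁]×[0,M₂] (vanishing outside 𝓜). -/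
def IsDensityOn (f : ℝ × ℝ → ℝ) (M₁ M₂ : ℝ) : Prop :=
  Measurable f ∧ (∀ p, 0 ≤ f p) ∧ (∀ p, p ∉ Mset M₁ M₂ → f p = 0) ∧ (∫ p, f p) = 1

/-- `g` is a probability density on [0,∞). -/
def IsCensDensity (g : ℝ → ℝ) : Prop :=
  Measurable g ∧ (∀ t, 0 ≤ g t) ∧ (∀ t, t < 0 → g t = 0) ∧ (∫ t, g t) = 1

lemma marg_integrable (f : ℝ × ℝ → ℝ) (hm : Measurable f) (hpos : ∀ p, 0 ≤ f p)
    (hint : Integrable f) (z : ℝ) (hz : 0 ≤ z) :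
    Integrable (fun u => ∫ v in (0 : ℝ)..z, f (u, v)) := by
  have hprod : (volume : Measure (ℝ × ℝ)) = (volume : Measure ℝ).prod volume :=
    (Measure.volume_eq_prod ℝ ℝ)
  rw [hprod] at hint
  have hslice : ∀ᵐ u : ℝ, Integrable (fun v => f (u, v)) := hint.prod_right_ae
  have hG : Integrable (fun u => ∫ v, f (u, v)) := hint.integral_prod_left
  have hmeas : StronglyMeasurable (fun u => ∫ v in Ioc (0:ℝ) z, f (u, v)) := by
    exact MeasureTheory.StronglyMeasurable.integral_prod_right' (ν := volume.restrict (Ioc 0 z)) hm.stronglyMeasurable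
  have heq : (fun u => ∫ v in (0:ℝ)..z, f (u, v)) = fun u => ∫ v in Ioc (0:ℝ) z, f (u, v) := by
    funext u; rw [intervalIntegral.integral_of_le hz]
  rw [heq]
  refine hG.mono hmeas.aestronglyMeasurable ?_
  filter_upwards [hslice] with u hu
  have h1 : 0 ≤ ∫ v in Ioc (0:ℝ) z, f (u, v) :=
    setIntegral_nonneg measurableSet_Ioc fun v _ => hpos _
  have h2 : (∫ v in Ioc (0:ℝ) z, f (u, v)) ≤ ∫ v, f (u, v) :=
    setIntegral_le_integral hu (Eventually.of_forall fun v => hpos _)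
  have h3 : 0 ≤ ∫ v, f (u, v) := integral_nonneg fun v => hpos _
  rw [Real.norm_of_nonneg h1, Real.norm_of_nonneg h3]
  exact h2

lemma density_integrable (f : ℝ × ℝ → ℝ) (M₁ M₂ : ℝ) (hf : IsDensityOn f M₁ M₂) :
    Integrable f := by
  by_contra hc
  have := integral_undef hc
  rw [hf.2.2.2] at this
  exact one_ne_zero this

theorem stmt11 (M₁ M₂ B Klow C η h t z : ℝ)
    (hM₁ : 0 < M₁) (hM₂ : 0 < M₂) (hB : 0 < B) (hKlow : 0 < Klow)
    (hC : 0 < C) (hη : 0 < η) (hh : 0 < h)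
    (ht : t ∈ Ico (0 : ℝ) M₁) (hz : z ∈ Ioc (0 : ℝ) M₂)
    (hth : t + h ≤ M₁) (hsmall : B * h ≤ C * η / 2)
    (f f₀ : ℝ × ℝ → ℝ) (g : ℝ → ℝ)
    (hf : IsDensityOn f M₁ M₂) (hf₀ : IsDensityOn f₀ M₁ M₂)
    (hmarg : ∀ x ∈ Icc (0 : ℝ) M₁, (∫ v in (0 : ℝ)..M₂, f (x, v)) ≤ B)
    (hg : IsCensDensity g)
    (hdev : distF f t z ≤ distF f₀ t z - C * η) :
    (∀ x ∈ Icc t (t + h), distF f x z - distF f₀ x z ≤ -(C * η / 2)) ∧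
      ((∀ x ∈ Ioo (0 : ℝ) M₁, Klow ≤ g x) →
        (∫ x in t..(t + h), g x * (distF f x z - distF f₀ x z)) ≤
          -((C * Klow / 2) * η * h)) := by
  obtain ⟨hmf, hposf, hvan, hone⟩ := hf
  obtain ⟨hmf₀, hposf₀, hvan₀, hone₀⟩ := hf₀
  have hintf : Integrable f := density_integrable f M₁ M₂ ⟨hmf, hposf, hvan, hone⟩
  have hintf₀ : Integrable f₀ := density_integrable f₀ M₁ M₂ ⟨hmf₀, hposf₀, hvan₀, hone₀⟩
  set Hf : ℝ → ℝ := fun u => ∫ v in (0:ℝ)..z, f (u, v) with hHfdef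
  set Hf₀ : ℝ → ℝ := fun u => ∫ v in (0:ℝ)..z, f₀ (u, v) with hHf₀def
  have hHf : Integrable Hf := marg_integrable f hmf hposf hintf z hz.1.le
  have hHf₀ : Integrable Hf₀ := marg_integrable f₀ hmf₀ hposf₀ hintf₀ z hz.1.le
  have hHfnn : ∀ u, 0 ≤ Hf u := fun u =>
    intervalIntegral.integral_nonneg hz.1.le fun v _ => hposf _
  have hHf₀nn : ∀ u, 0 ≤ Hf₀ u := fun u =>
    intervalIntegral.integral_nonneg hz.1.le fun v _ => hposf₀ _
  -- a.e. bound Hf ≤ B on [0, M₁]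
  have hslice : ∀ᵐ u : ℝ, Integrable (fun v => f (u, v)) := by
    have hprod : (volume : Measure (ℝ × ℝ)) = (volume : Measure ℝ).prod volume :=
      (Measure.volume_eq_prod ℝ ℝ)
    rw [hprod] at hintf
    exact hintf.prod_right_ae
  have hbd : ∀ᵐ u : ℝ, u ∈ Icc (0:ℝ) M₁ → Hf u ≤ B := by
    filter_upwards [hslice] with u hu hmem
    have e1 : Hf u = ∫ v in Ioc (0:ℝ) z, f (u, v) := intervalIntegral.integral_of_le hz.1.le
    have e2 : (∫ v in (0:ℝ)..M₂, f (u, v)) = ∫ v in Ioc (0:ℝ) M₂, f (u, v) :=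
      intervalIntegral.integral_of_le hM₂.le
    have hsub : Ioc (0:ℝ) z ⊆ Ioc (0:ℝ) M₂ := Ioc_subset_Ioc le_rfl hz.2
    have := setIntegral_mono_set (hu.integrableOn (s := Ioc (0:ℝ) M₂))
      (Eventually.of_forall fun v => hposf _) (HasSubset.Subset.eventuallyLE hsub)
    calc Hf u = ∫ v in Ioc (0:ℝ) z, f (u, v) := e1
      _ ≤ ∫ v in Ioc (0:ℝ) M₂, f (u, v) := this
      _ = ∫ v in (0:ℝ)..M₂, f (u, v) := e2.symm
      _ ≤ B := hmarg u hmem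
  -- Part 1
  have key : ∀ x ∈ Icc t (t + h), distF f x z - distF f₀ x z ≤ -(C * η / 2) := by
    intro x hx
    have htx : t ≤ x := hx.1
    have hxth : x ≤ t + h := hx.2
    have hsplit : distF f x z = distF f t z + ∫ u in t..x, Hf u := by
      rw [distF, distF]
      exact (intervalIntegral.integral_add_adjacent_intervals
        hHf.intervalIntegrable hHf.intervalIntegrable).symm
    have hsplit₀ : distF f₀ x z = distF f₀ t z + ∫ u in t..x, Hf₀ u := by
      rw [distF, distF]
      exact (intervalIntegral.integral_add_adjacent_intervals
        hHf₀.intervalIntegrable hHf₀.intervalIntegrable).symm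
    have hb1 : (∫ u in t..x, Hf u) ≤ B * (x - t) := by
      have hmono : (∫ u in t..x, Hf u) ≤ ∫ u in t..x, B := by
        refine intervalIntegral.integral_mono_ae_restrict htx hHf.intervalIntegrable
          (intervalIntegrable_const) ?_
        refine (ae_restrict_iff' measurableSet_Icc).2 ?_
        filter_upwards [hbd] with u hu humem
        exact hu ⟨le_trans ht.1 humem.1, le_trans humem.2 (le_trans hxth hth)⟩
      calc (∫ u in t..x, Hf u) ≤ ∫ u in t..x, B := hmono
        _ = (x - t) * B := by rw [intervalIntegral.integral_const]; simp [smul_eq_mul]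
        _ = B * (x - t) := by ring
    have hb2 : 0 ≤ ∫ u in t..x, Hf₀ u :=
      intervalIntegral.integral_nonneg htx fun u _ => hHf₀nn u
    have hxt : x - t ≤ h := by linarith
    have : B * (x - t) ≤ B * h := mul_le_mul_of_nonneg_left hxt hB.le
    rw [hsplit, hsplit₀]
    linarith
  refine ⟨key, fun hgK => ?_⟩
  -- Part 2
  obtain ⟨hmg, hposg, _, hgone⟩ := hg
  have hintg : Integrable g := by
    by_contra hc
    have := integral_undef hc
    rw [hgone] at this
    exact one_ne_zero this
  have hdcont : Continuous fun x => distF f x z - distF f₀ x z := by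
    have c1 : Continuous fun x => distF f x z := hHf.continuous_primitive 0
    have c2 : Continuous fun x => distF f₀ x z := hHf₀.continuous_primitive 0
    exact c1.sub c2
  have hφint : IntervalIntegrable (fun x => g x * (distF f x z - distF f₀ x z))
      volume t (t + h) :=
    hintg.intervalIntegrable.mul_continuousOn hdcont.continuousOn
  have hnull : ∀ᵐ x : ℝ, x ∉ ({t, t + h} : Set ℝ) :=
    Set.Countable.ae_notMem (Set.Countable.insert _ (Set.countable_singleton _)) volume
  have hae : ∀ᵐ x ∂(volume.restrict (Icc t (t + h))),
      g x * (distF f x z - distF f₀ x z) ≤ -(Klow * (C * η / 2)) := by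
    refine (ae_restrict_iff' measurableSet_Icc).2 ?_
    filter_upwards [hnull] with x hxn hxI
    have hx1 : x ≠ t := fun hcon => hxn (by simp [hcon])
    have hx2 : x ≠ t + h := fun hcon => hxn (by simp [hcon])
    have hxIoo : x ∈ Ioo (0:ℝ) M₁ :=
      ⟨lt_of_le_of_lt ht.1 (lt_of_le_of_ne hxI.1 (Ne.symm hx1)),
        lt_of_lt_of_le (lt_of_le_of_ne hxI.2 hx2) hth⟩
    have hd : distF f x z - distF f₀ x z ≤ -(C * η / 2) := key x hxI
    have hgx : Klow ≤ g x := hgK x hxIoo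
    have h1 : g x * (distF f x z - distF f₀ x z) ≤ g x * (-(C * η / 2)) :=
      mul_le_mul_of_nonneg_left hd (hposg x)
    have h2 : g x * (-(C * η / 2)) ≤ Klow * (-(C * η / 2)) :=
      mul_le_mul_of_nonpos_right hgx (by nlinarith)
    linarith
  have hmono : (∫ x in t..(t + h), g x * (distF f x z - distF f₀ x z))
      ≤ ∫ x in t..(t + h), -(Klow * (C * η / 2)) :=
    intervalIntegral.integral_mono_ae_restrict (by linarith) hφint
      intervalIntegrable_const hae
  have hconst : (∫ x in t..(t + h), -(Klow * (C * η / 2)))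
      = -((C * Klow / 2) * η * h) := by
    rw [intervalIntegral.integral_const]
    simp [smul_eq_mul]
    ring
  linarith [hmono, hconst.le, hconst.ge]

end
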